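/- Let ι, κ ∈ F^m each have Hamming weight at least 3 and satisfy d(ι, κ) ≥ 3. Then the word ẑι + e^(ι) + ẑκ + e^(κ) does not belong to the linear span (over GF(2)) of R_ι ∪ R_κ. -/

import Mathlib

/-- `F^m`: binary words of length `m`, i.e. the vector space `(Fin m → ZMod 2)` over GF(2). -/
abbrev Fm (m : ℕ) := Fin m → ZMod 2

/-- Index set for `F^n` with `n = 2^m - 1`: the nonzero vectors of `F^m`. -/
abbrev Idx (m : ℕ) := {v : Fm m // v ≠ 0}

/-- `F^n`: binary words of length `n = 2^m - 1`, with coordinates indexed by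
nonzero vectors of `F^m`. -/
abbrev Fn (m : ℕ) := Idx m → ZMod 2

/-- The coordinate of `c : F^n` at index `α : F^m` (junk value `0` when `α = 0`,
which is never used since coordinates are only ever accessed at nonzero indices). -/
def coord {m : ℕ} (c : Fn m) (α : Fm m) : ZMod 2 :=
  if h : α = 0 then 0 else c ⟨α, h⟩

/-- `e^(ι)`: the word of `F^n` with `1` in coordinate `ι` and `0` elsewhere. -/
def eWord {m : ℕ} (ι : Idx m) : Fn m := fun κ => if κ = ι then 1 else 0

/-- `ẑα = (α, 0^{n-m})`: the word of `F^n` whose coordinate at index `κ` equals `α i`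
if `κ = π^(i)` is the `i`-th standard basis vector `Pi.single i 1`, and `0` otherwise. -/
def zhat {m : ℕ} (α : Fm m) : Fn m :=
  fun κ => ∑ i : Fin m, if (κ : Fm m) = Pi.single i 1 then α i else 0

/-- The Hamming code `H = {c ∈ F^n : ∑_{ι ≠ 0} c_ι • ι = 0}`. -/
def hammingCode (m : ℕ) : Set (Fn m) :=
  {c | ∑ ι : Idx m, c ι • (ι : Fm m) = 0}

/-- The linear `ι`-component `R_ι = {c ∈ H : c_α = c_{α+ι} ∀ α ∉ {0, ι}}`. -/
def Rcomp {m : ℕ} (ι : Idx m) : Set (Fn m) :=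
  {c | c ∈ hammingCode m ∧
    ∀ α : Fm m, α ≠ 0 → α ≠ (ι : Fm m) → coord c α = coord c (α + ι)}

/-- The coset `M + z = {c + z : c ∈ M}`. -/
def coset {m : ℕ} (M : Set (Fn m)) (z : Fn m) : Set (Fn m) := (fun c => c + z) '' M

/-- The neighborhood `Ω(M)` of `M ⊆ F^n`: all words at Hamming distance at most 1 from `M`. -/
def nbhd {m : ℕ} (M : Set (Fn m)) : Set (Fn m) :=
  {x | ∃ c ∈ M, hammingDist x c ≤ 1}

/-- A `1`-code: any two distinct elements are at Hamming distance at least 3. -/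
def IsOneCode {ι : Type*} [Fintype ι] (C : Set (ι → ZMod 2)) : Prop :=
  ∀ x ∈ C, ∀ y ∈ C, x ≠ y → 3 ≤ hammingDist x y

/-- A `1`-perfect code in `F^n`: a `1`-code whose radius-1 balls cover all of `F^n`. -/
def IsOnePerfect {m : ℕ} (P : Set (Fn m)) : Prop :=
  IsOneCode P ∧ ∀ x : Fn m, ∃ c ∈ P, hammingDist x c ≤ 1

/-- In characteristic 2, the sum of two distinct vectors is nonzero. -/
lemma add_ne_zero_of_ne' {m : ℕ} {ι κ : Fm m} (h : ι ≠ κ) : ι + κ ≠ 0 := by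
  intro h0
  apply h
  funext i
  have h1 := congrFun h0 i
  have key : ∀ a b : ZMod 2, a + b = 0 → a = b := by decide
  exact key _ _ h1


section Helpers

lemma zmod2_add_self' : ∀ a : ZMod 2, a + a = 0 := by decide
lemma zmod2_sub' : ∀ a b : ZMod 2, a - b = a + b := by decide
lemma zmod2_pairs : ∀ p q : ZMod 2, p + p + q + q = 0 := by decide
lemma zmod2_pairs' : ∀ p q : ZMod 2, p + q + p + q = 0 := by decide
lemma zmod2_ne_add : ∀ p q : ZMod 2, p ≠ q → p + q = 1 := by decide

lemma Fm_add_self {m : ℕ} (x : Fm m) : x + x = 0 :=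
  funext fun i => zmod2_add_self' (x i)

lemma Fm_sub_eq_add {m : ℕ} (x y : Fm m) : x - y = x + y :=
  funext fun i => zmod2_sub' (x i) (y i)

lemma eq_add_of_add_eq' {m : ℕ} {x y z : Fm m} (h : x + y = z) : x = z + y := by
  rw [← h, add_assoc, Fm_add_self, add_zero]

lemma Fm_add_left_ne_self {m : ℕ} {x y : Fm m} (hx : x ≠ 0) : x + y ≠ y := by
  intro h
  apply hx
  have := eq_add_of_add_eq' h
  rwa [Fm_add_self] at this

lemma hn_single_le {m : ℕ} (j : Fin m) (c : ZMod 2) :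
    hammingNorm (Pi.single j c : Fm m) ≤ 1 := by
  rw [hammingNorm]
  refine le_trans (Finset.card_le_card (fun i hi => ?_))
    (le_of_eq (Finset.card_singleton j))
  simp only [Finset.mem_filter, Finset.mem_univ, true_and] at hi
  simp only [Finset.mem_singleton]
  by_contra hij
  exact hi (by simp [Pi.single_eq_of_ne hij])

lemma hn_add_le {m : ℕ} (x y : Fm m) :
    hammingNorm (x + y) ≤ hammingNorm x + hammingNorm y := by
  rw [← hammingDist_zero_right]
  calc hammingDist (x + y) 0 ≤ hammingDist (x + y) y + hammingDist y 0 :=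
        hammingDist_triangle _ _ _
    _ = hammingNorm x + hammingNorm y := by
        rw [hammingDist_eq_hammingNorm, hammingDist_zero_right, ← sub_eq_neg_add, Fm_sub_eq_add,
          add_comm y, add_assoc, Fm_add_self, add_zero]

lemma big_ne_pair {m : ℕ} {x : Fm m} (hx : 3 ≤ hammingDist x 0) (i j : Fin m) :
    x ≠ Pi.single i 1 + Pi.single j 1 := by
  intro h
  rw [hammingDist_zero_right, h] at hx
  have := le_trans hx (hn_add_le _ _)
  have h1 := hn_single_le i (1 : ZMod 2)
  have h2 := hn_single_le j (1 : ZMod 2)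
  omega

lemma big_ne_single {m : ℕ} {x : Fm m} (hx : 3 ≤ hammingDist x 0) (i : Fin m) :
    x ≠ Pi.single i 1 := by
  intro h
  rw [hammingDist_zero_right, h] at hx
  have := hn_single_le i (1 : ZMod 2)
  omega

lemma coord_add {m : ℕ} (c c' : Fn m) (α : Fm m) :
    coord (c + c') α = coord c α + coord c' α := by
  unfold coord; split <;> simp

lemma coord_smul {m : ℕ} (r : ZMod 2) (c : Fn m) (α : Fm m) :
    coord (r • c) α = r * coord c α := by
  unfold coord; split <;> simp

lemma coord_zhat_single {m : ℕ} (α : Fm m) (j : Fin m) :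
    coord (zhat α) (Pi.single j 1) = α j := by
  have hne : (Pi.single j 1 : Fm m) ≠ 0 := by
    intro h
    have := congrFun h j
    rw [Pi.single_eq_same] at this
    exact one_ne_zero this
  rw [coord, dif_neg hne]
  show (∑ i : Fin m, if (Pi.single j 1 : Fm m) = Pi.single i 1 then α i else 0) = α j
  rw [Finset.sum_eq_single j]
  · rw [if_pos rfl]
  · intro i _ hij
    rw [if_neg]
    intro h
    have := congrFun h j
    rw [Pi.single_eq_same] at this
    exact one_ne_zero (this.trans (by simp [Pi.single_eq_of_ne (Ne.symm hij)]))
  · intro h; exact absurd (Finset.mem_univ j) h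

lemma coord_zhat_nonsingle {m : ℕ} (α : Fm m) (v : Fm m)
    (h : ∀ i, v ≠ Pi.single i 1) : coord (zhat α) v = 0 := by
  rw [coord]
  split
  · rfl
  · exact Finset.sum_eq_zero fun i _ => if_neg (h i)

lemma coord_eWord_ne {m : ℕ} (w : Idx m) (v : Fm m) (hv : v ≠ (w : Fm m)) :
    coord (eWord w) v = 0 := by
  rw [coord]
  split
  · rfl
  · exact if_neg fun h => hv (congrArg Subtype.val h)

end Helpers

/-- If `ι, κ ∈ F^m` each have Hamming weight at least 3 and `d(ι, κ) ≥ 3`, then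
`ẑι + e^(ι) + ẑκ + e^(κ)` does not belong to the GF(2)-linear span of `R_ι ∪ R_κ`. -/
theorem stmt3 (m : ℕ) (hm : 1 ≤ m) (ι κ : Idx m)
    (hι : 3 ≤ hammingDist (ι : Fm m) 0) (hκ : 3 ≤ hammingDist (κ : Fm m) 0)
    (hικ : 3 ≤ hammingDist (ι : Fm m) (κ : Fm m)) :
    zhat (ι : Fm m) + eWord ι + zhat (κ : Fm m) + eWord κ ∉
      Submodule.span (ZMod 2) (Rcomp ι ∪ Rcomp κ) := by
  intro hz
  have hι0 : (ι : Fm m) ≠ 0 := ι.2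
  have hκ0 : (κ : Fm m) ≠ 0 := κ.2
  have hsum3 : 3 ≤ hammingDist ((ι : Fm m) + (κ : Fm m)) 0 := by
    rw [hammingDist_zero_right, ← Fm_sub_eq_add, sub_eq_neg_add, ← hammingDist_eq_hammingNorm,
      hammingDist_comm]
    exact hικ
  have hneικ : (ι : Fm m) ≠ κ := by
    intro h
    rw [h, hammingDist_self] at hικ
    omega
  obtain ⟨i0, hi0⟩ := Function.ne_iff.mp hneικ
  set β : Fm m := Pi.single i0 1 with hβdef
  have hβ0 : β ≠ 0 := by
    intro h
    have := congrFun h i0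
    rw [hβdef, Pi.single_eq_same] at this
    exact one_ne_zero this
  have hβι : β ≠ (ι : Fm m) := fun h => big_ne_single hι i0 h.symm
  have hβκ : β ≠ (κ : Fm m) := fun h => big_ne_single hκ i0 h.symm
  have hβικ : β ≠ (ι : Fm m) + (κ : Fm m) := fun h => big_ne_single hsum3 i0 h.symm
  have hkey : ∀ u : Fm m, 3 ≤ hammingDist u 0 → ∀ j, β + u ≠ Pi.single j 1 := by
    intro u hu j h
    apply big_ne_pair hu i0 j
    have h2 : u = Pi.single j 1 + β := eq_add_of_add_eq' (by rwa [add_comm] at h)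
    rw [h2, add_comm]
  -- inequalities among the relevant points
  have ne1 : β + (ι : Fm m) ≠ (ι : Fm m) := Fm_add_left_ne_self hβ0
  have ne2 : β + (ι : Fm m) ≠ (κ : Fm m) := by
    intro h
    exact hβικ (by rw [eq_add_of_add_eq' h, add_comm])
  have ne3 : β + (κ : Fm m) ≠ (ι : Fm m) := by
    intro h
    exact hβικ (eq_add_of_add_eq' h)
  have ne4 : β + (κ : Fm m) ≠ (κ : Fm m) := Fm_add_left_ne_self hβ0
  have ne5 : β + ((ι : Fm m) + (κ : Fm m)) ≠ (ι : Fm m) := by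
    intro h
    apply hβκ
    have := eq_add_of_add_eq' h
    rwa [← add_assoc, Fm_add_self, zero_add] at this
  have ne6 : β + ((ι : Fm m) + (κ : Fm m)) ≠ (κ : Fm m) := by
    intro h
    apply hβι
    have := eq_add_of_add_eq' h
    rwa [add_comm (ι : Fm m) κ, ← add_assoc, Fm_add_self, zero_add] at this
  -- the separating linear functional
  set φ : Fn m →ₗ[ZMod 2] ZMod 2 :=
    { toFun := fun w => coord w β + coord w (β + (ι : Fm m)) + coord w (β + (κ : Fm m))
        + coord w (β + ((ι : Fm m) + (κ : Fm m)))
      map_add' := fun x y => by simp only [coord_add]; ring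
      map_smul' := fun r x => by
        simp only [coord_smul, RingHom.id_apply, smul_eq_mul]; ring } with hφdef
  have hφ : ∀ w : Fn m, φ w = coord w β + coord w (β + (ι : Fm m)) + coord w (β + (κ : Fm m))
      + coord w (β + ((ι : Fm m) + (κ : Fm m))) := fun w => rfl
  -- φ vanishes on both components
  have hker : Rcomp ι ∪ Rcomp κ ⊆ (LinearMap.ker φ : Set (Fn m)) := by
    intro w hw
    simp only [SetLike.mem_coe, LinearMap.mem_ker]
    rcases hw with ⟨-, hw⟩ | ⟨-, hw⟩
    · have h1 : coord w β = coord w (β + ι) := hw β hβ0 hβι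
      have h2 : coord w (β + κ) = coord w (β + ((ι : Fm m) + (κ : Fm m))) := by
        have := hw (β + κ) (add_ne_zero_of_ne' hβκ) ne3
        rwa [add_assoc, add_comm (κ : Fm m) (ι : Fm m)] at this
      rw [hφ, ← h1, ← h2]
      exact zmod2_pairs _ _
    · have h1 : coord w β = coord w (β + κ) := hw β hβ0 hβκ
      have h2 : coord w (β + ι) = coord w (β + ((ι : Fm m) + (κ : Fm m))) := by
        have := hw (β + ι) (add_ne_zero_of_ne' hβι) ne2
        rwa [add_assoc] at this
      rw [hφ, ← h1, ← h2]
      exact zmod2_pairs' _ _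
  -- φ of the target word equals 1
  have hz1 : φ (zhat (ι : Fm m) + eWord ι + zhat (κ : Fm m) + eWord κ) = 1 := by
    rw [hφ]
    simp only [coord_add]
    rw [hβdef]
    rw [coord_zhat_single, coord_zhat_single,
      coord_eWord_ne ι _ (by rw [← hβdef]; exact fun h => hβι h),
      coord_eWord_ne κ _ (by rw [← hβdef]; exact fun h => hβκ h),
      coord_zhat_nonsingle _ _ (by rw [← hβdef]; exact hkey _ hι),
      coord_zhat_nonsingle _ _ (by rw [← hβdef]; exact hkey _ hι),
      coord_zhat_nonsingle _ _ (by rw [← hβdef]; exact hkey _ hκ),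
      coord_zhat_nonsingle _ _ (by rw [← hβdef]; exact hkey _ hκ),
      coord_zhat_nonsingle _ _ (by rw [← hβdef]; exact hkey _ hsum3),
      coord_zhat_nonsingle _ _ (by rw [← hβdef]; exact hkey _ hsum3),
      coord_eWord_ne ι _ (by rw [← hβdef]; exact ne1),
      coord_eWord_ne ι _ (by rw [← hβdef]; exact ne3),
      coord_eWord_ne ι _ (by rw [← hβdef]; exact ne5),
      coord_eWord_ne κ _ (by rw [← hβdef]; exact ne2),
      coord_eWord_ne κ _ (by rw [← hβdef]; exact ne4),
      coord_eWord_ne κ _ (by rw [← hβdef]; exact ne6)]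
    simp only [add_zero, zero_add]
    exact zmod2_ne_add _ _ hi0
  have hle : Submodule.span (ZMod 2) (Rcomp ι ∪ Rcomp κ) ≤ LinearMap.ker φ :=
    Submodule.span_le.mpr hker
  have := hle hz
  rw [LinearMap.mem_ker, hz1] at this
  exact one_ne_zero this
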